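/- Let A be a commutative ring. If an A-module M has a finite length resolution by projective modules and every projective A-module is free as a Z/nZ-module under a ring map Z/nZ → A (for example A = (ZMod n)[Λ] with n a prime power), then M is free as a Z/nZ-module. Specialize: if A = (ZMod p^t)[x, x^{-1}] (Laurent polynomials over Z/p^tZ) and M is an A-module of finite projective dimension, then the underlying Z/p^tZ-module of M is free. -/

import Mathlib

variable {n : ℕ} [NeZero n]

lemma zmod_natCast_val' (a : ZMod n) : ((a.val : ℕ) : ZMod n) = a := by
  rw [ZMod.natCast_val, ZMod.cast_id]

lemma zmod_exists_mul_eq (a c : ZMod n) (H : ∀ s : ZMod n, s * a = 0 → s * c = 0) :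
    ∃ u : ZMod n, c = u * a := by
  have hn : 0 < n := Nat.pos_of_ne_zero (NeZero.ne n)
  set g := Nat.gcd a.val n with hg
  have hgn : g ∣ n := Nat.gcd_dvd_right _ _
  have hga : g ∣ a.val := Nat.gcd_dvd_left _ _
  have hgpos : 0 < g := Nat.gcd_pos_of_pos_right _ hn
  have h1 : ((n / g : ℕ) : ZMod n) * a = 0 := by
    rw [← zmod_natCast_val' a, ← Nat.cast_mul]
    rw [ZMod.natCast_eq_zero_iff]
    obtain ⟨m, hm⟩ := hga
    refine ⟨m, ?_⟩
    rw [hm, ← Nat.mul_assoc, Nat.div_mul_cancel hgn]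
  have h2 := H _ h1
  have h3 : n ∣ n / g * c.val := by
    rw [← ZMod.natCast_eq_zero_iff, Nat.cast_mul, zmod_natCast_val']
    exact h2
  have h4 : g ∣ c.val := by
    obtain ⟨m, hm⟩ := h3
    have hq : 0 < n / g := Nat.div_pos (Nat.le_of_dvd hn hgn) hgpos
    refine ⟨m, Nat.eq_of_mul_eq_mul_left hq ?_⟩
    rw [hm]
    have hng : g * (n / g) = n := Nat.mul_div_cancel' hgn
    calc n * m = g * (n / g) * m := by rw [hng]
      _ = n / g * (g * m) := by ring
  obtain ⟨x, hx⟩ : ∃ x : ZMod n, (g : ZMod n) = x * a := by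
    have hb := Nat.gcd_eq_gcd_ab a.val n
    refine ⟨((Nat.gcdA a.val n : ℤ) : ZMod n), ?_⟩
    have : ((g : ℤ) : ZMod n) = ((a.val * Nat.gcdA a.val n + n * Nat.gcdB a.val n : ℤ) : ZMod n) :=
      congrArg _ hb
    push_cast at this
    rw [ZMod.natCast_self, zmod_natCast_val'] at this
    simpa [mul_comm] using this
  obtain ⟨m, hm⟩ := h4
  refine ⟨(m : ZMod n) * x, ?_⟩
  calc c = ((c.val : ℕ) : ZMod n) := (zmod_natCast_val' c).symm
    _ = ((g * m : ℕ) : ZMod n) := by rw [← hm]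
    _ = (g : ZMod n) * m := by push_cast; ring
    _ = (m : ZMod n) * x * a := by rw [hx]; ring

open Module in
lemma zmod_pir (n : ℕ) : IsPrincipalIdealRing (ZMod n) :=
  IsPrincipalIdealRing.of_surjective (Int.castRingHom (ZMod n)) ZMod.intCast_surjective


lemma baer_finsupp (ι : Type) : Module.Baer (ZMod n) (ι →₀ ZMod n) := by
  intro I g
  haveI := zmod_pir n
  obtain ⟨a, ha⟩ : ∃ a, I = Ideal.span {a} := (IsPrincipalIdealRing.principal I).principal
  subst ha
  have hamem : a ∈ Ideal.span {a} := Ideal.mem_span_singleton_self a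
  set b : ι →₀ ZMod n := g ⟨a, hamem⟩ with hb
  have key : ∀ i, ∃ u : ZMod n, b i = u * a := by
    intro i
    refine zmod_exists_mul_eq a (b i) (fun s hs => ?_)
    have : s • (⟨a, hamem⟩ : Ideal.span {a}) = 0 := by
      ext; simpa [smul_eq_mul] using hs
    have h0 : s • b = 0 := by rw [hb, ← map_smul, this, map_zero]
    calc s * b i = (s • b) i := rfl
      _ = 0 := by rw [h0]; rfl
  choose u hu using key
  set e : ι →₀ ZMod n := b.support.sum (fun i => Finsupp.single i (u i)) with he
  have hae : a • e = b := by
    rw [he, Finset.smul_sum]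
    have : ∀ i ∈ b.support, a • Finsupp.single i (u i) = Finsupp.single i (b i) := by
      intro i _
      rw [Finsupp.smul_single, smul_eq_mul, mul_comm, ← hu]
    rw [Finset.sum_congr rfl this]
    exact Finsupp.sum_single b
  refine ⟨LinearMap.toSpanSingleton (ZMod n) _ e, fun x hx => ?_⟩
  obtain ⟨s, hs⟩ := Ideal.mem_span_singleton'.mp hx
  have : (⟨x, hx⟩ : Ideal.span {a}) = s • ⟨a, hamem⟩ := by ext; simp [← hs, smul_eq_mul]
  rw [this, map_smul, ← hb, LinearMap.toSpanSingleton_apply, ← hs, mul_smul, ← hae]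

lemma injective_of_free (Q : Type) [AddCommGroup Q] [Module (ZMod n) Q]
    [Module.Free (ZMod n) Q] : Module.Injective (ZMod n) Q := by
  set b := Module.Free.chooseBasis (ZMod n) Q
  have hinj : Module.Injective (ZMod n) (Module.Free.ChooseBasisIndex (ZMod n) Q →₀ ZMod n) :=
    (baer_finsupp _).injective
  constructor
  intro X Y _ _ _ _ f hf g
  obtain ⟨h, hh⟩ := hinj.out f hf (b.repr.toLinearMap ∘ₗ g)
  refine ⟨b.repr.symm.toLinearMap ∘ₗ h, fun x => ?_⟩
  simp [hh x]


section
variable (p t : ℕ)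

lemma pt_ne_zero (hp : p.Prime) : NeZero (p ^ t) := ⟨pow_ne_zero _ hp.ne_zero⟩

lemma span_p_maximal (hp : p.Prime) (ht : 1 ≤ t) : (Ideal.span {(p : ZMod (p ^ t))}).IsMaximal := by
  haveI := pt_ne_zero p t hp
  have hunit : ∀ x : ZMod (p ^ t), x ∉ Ideal.span {(p : ZMod (p ^ t))} → IsUnit x := by
    intro x hx
    have hpdvd : ¬ (p ∣ x.val) := by
      intro ⟨m, hm⟩
      refine hx (Ideal.mem_span_singleton'.mpr ⟨(m : ZMod (p ^ t)), ?_⟩)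
      have hxv : x = ((x.val : ℕ) : ZMod (p ^ t)) := by rw [ZMod.natCast_val, ZMod.cast_id]
      rw [hxv, hm]; push_cast; ring
    have hco : Nat.Coprime x.val (p ^ t) :=
      Nat.Coprime.pow_right _ (Nat.coprime_comm.mp (hp.coprime_iff_not_dvd.mpr hpdvd))
    have := (ZMod.isUnit_iff_coprime x.val (p ^ t)).mpr hco
    rwa [ZMod.natCast_val, ZMod.cast_id] at this
  rw [Ideal.isMaximal_iff]
  refine ⟨?_, ?_⟩
  · intro h1
    obtain ⟨u, hu⟩ := Ideal.mem_span_singleton'.mp h1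
    have hpu : IsUnit ((p : ℕ) : ZMod (p ^ t)) := IsUnit.of_mul_eq_one u (by rw [mul_comm, hu])
    have hcop := (ZMod.isUnit_iff_coprime p (p ^ t)).mp hpu
    have hd : p ∣ p ^ t := dvd_pow_self p (by omega)
    have h1 := Nat.eq_one_of_dvd_coprimes hcop (dvd_refl p) hd
    have h2 := hp.one_lt
    omega
  · intro J x hIJ hxI hxJ
    obtain ⟨v, hv⟩ := hunit x hxI
    have : ((v⁻¹ : (ZMod (p ^ t))ˣ) : ZMod (p ^ t)) * x ∈ J := J.mul_mem_left _ hxJ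
    rwa [← hv, Units.inv_mul] at this

lemma span_p_pow_t : (Ideal.span {(p : ZMod (p ^ t))}) ^ t = ⊥ := by
  rw [Ideal.span_singleton_pow]
  have : (p : ZMod (p ^ t)) ^ t = 0 := by
    rw [← Nat.cast_pow, ZMod.natCast_self]
  rw [this, Ideal.span_singleton_eq_bot.mpr rfl]
end


lemma free_of_projective (p t : ℕ) (hp : p.Prime) (ht : 1 ≤ t)
    (N : Type) [AddCommGroup N] [Module (ZMod (p ^ t)) N]
    [Module.Projective (ZMod (p ^ t)) N] : Module.Free (ZMod (p ^ t)) N := by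
  set R := ZMod (p ^ t)
  set π : R := (p : R) with hπ
  set I : Ideal R := Ideal.span {π} with hI
  haveI hmax : I.IsMaximal := span_p_maximal p t hp ht
  letI : Field (R ⧸ I) := Ideal.Quotient.field I
  set Q := N ⧸ (I • ⊤ : Submodule R N)
  letI : Module (R ⧸ I) Q := inferInstance
  set b := Module.Free.chooseBasis (R ⧸ I) Q with hbdef
  set ι := Module.Free.ChooseBasisIndex (R ⧸ I) Q
  -- lift basis vectors
  have hmksurj : Function.Surjective (Submodule.Quotient.mk (p := (I • ⊤ : Submodule R N))) :=
    Submodule.Quotient.mk_surjective _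
  choose x hx using fun i => hmksurj (b i)
  set F := ι →₀ R
  set πF : F →ₗ[R] N := Finsupp.linearCombination R x with hπF
  set W := LinearMap.range πF with hW
  -- quotient map as linear map
  set mkQ : N →ₗ[R] Q := Submodule.mkQ (I • ⊤ : Submodule R N) with hmkQ
  have hmk_smul : ∀ (r : R) (m : N), mkQ (r • m) = (Ideal.Quotient.mk I r) • mkQ m :=
    fun r m => (Module.Quotient.mk_smul_mk N I r m).symm
  -- key computation: mkQ (πF z) = linearCombination of the reduced coefficients
  have hcomp : ∀ z : F, mkQ (πF z) =
      Finsupp.linearCombination (R ⧸ I) (fun i => b i)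
        (z.mapRange (Ideal.Quotient.mk I) (map_zero _)) := by
    intro z
    rw [hπF, Finsupp.linearCombination_apply, map_finsuppSum, Finsupp.linearCombination_apply,
      Finsupp.sum_mapRange_index (by simp)]
    refine Finsupp.sum_congr (fun i _ => ?_)
    rw [hmk_smul]
    congr 1
    exact hx i
  -- claim 1: every element is in W ⊔ I • ⊤
  have claim1 : ∀ m : N, m ∈ W ⊔ (I • ⊤ : Submodule R N) := by
    intro m
    set c := b.repr (mkQ m) with hc
    choose ρ hρ using fun q : R ⧸ I => Ideal.Quotient.mk_surjective (I := I) q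
    set z : F := c.support.sum (fun i => Finsupp.single i (ρ (c i))) with hz
    have hzmap : z.mapRange (Ideal.Quotient.mk I) (map_zero _) = c := by
      ext j
      rw [Finsupp.mapRange_apply, hz, Finsupp.finset_sum_apply]
      simp only [Finsupp.single_apply]
      rw [Finset.sum_ite_eq' c.support j (fun i => ρ (c i))]
      by_cases hj : j ∈ c.support
      · rw [if_pos hj, hρ]
      · rw [if_neg hj, map_zero]
        exact (Finsupp.notMem_support_iff.mp hj).symm
    have : mkQ (πF z) = mkQ m := by
      rw [hcomp, hzmap]
      exact b.linearCombination_repr (mkQ m)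
    have hmem : m - πF z ∈ (I • ⊤ : Submodule R N) := by
      rw [← Submodule.Quotient.eq]
      exact this.symm
    have hmm : m = πF z + (m - πF z) := by abel
    rw [hmm]
    exact Submodule.add_mem_sup (LinearMap.mem_range_self _ _) hmem
  -- claim 2: surjectivity of πF
  have claim2 : Function.Surjective πF := by
    rw [← LinearMap.range_eq_top]
    have hj : ∀ j : ℕ, (⊤ : Submodule R N) ≤ W ⊔ (I ^ j • ⊤ : Submodule R N) := by
      intro j
      induction j with
      | zero =>
        rw [pow_zero, Ideal.one_eq_top, Submodule.top_smul]
        exact le_sup_right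
      | succ j ih =>
        refine le_trans ih (sup_le le_sup_left ?_)
        have h1 : (I ^ j • ⊤ : Submodule R N) ≤ I ^ j • (W ⊔ (I • ⊤ : Submodule R N)) :=
          smul_mono_right (I ^ j) (show (⊤ : Submodule R N) ≤ _ from fun m _ => claim1 m)
        refine le_trans h1 ?_
        rw [Submodule.smul_sup]
        refine sup_le (le_trans Submodule.smul_le_right le_sup_left) ?_
        rw [← Submodule.smul_assoc, smul_eq_mul, ← pow_succ]
        exact le_sup_right
    have htop := hj t
    rw [hI, span_p_pow_t p t, Submodule.bot_smul, sup_bot_eq] at htop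
    exact top_le_iff.mp htop
  obtain ⟨σ, hσ⟩ := Module.projective_lifting_property πF LinearMap.id claim2
  -- claim 3: kernel coefficients lie in I
  have claim3 : ∀ z : F, πF z = 0 → ∀ i, z i ∈ I := by
    intro z hz i
    have h0 : Finsupp.linearCombination (R ⧸ I) (fun i => b i)
        (z.mapRange (Ideal.Quotient.mk I) (map_zero _)) = 0 := by
      rw [← hcomp, hz, map_zero]
    have hinj : Function.Injective (Finsupp.linearCombination (R ⧸ I) (fun i => b i)) := by
      intro u v huv
      have : b.repr.symm u = b.repr.symm v := by
        rw [b.repr_symm_apply, b.repr_symm_apply]; exact huv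
      exact b.repr.symm.injective this
    have : z.mapRange (Ideal.Quotient.mk I) (map_zero _) = 0 := by
      apply hinj; rw [h0, map_zero]
    have := congrArg (fun f => f i) this
    simp only [Finsupp.mapRange_apply, Finsupp.coe_zero, Pi.zero_apply] at this
    exact (Ideal.Quotient.eq_zero_iff_mem).mp this
  -- claim 4: kernel elements are divisible by π within the kernel
  have claim4 : ∀ z : F, πF z = 0 → ∃ w : F, πF w = 0 ∧ z = π • w := by
    intro z hz
    have := fun i => Ideal.mem_span_singleton'.mp (claim3 z hz i)
    choose u hu using this
    classical
    set u' : ι → R := fun i => if i ∈ z.support then u i else 0 with hu'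
    have hsupp : ∀ i, u' i ≠ 0 → i ∈ z.support := by
      intro i h
      by_contra hc
      apply h
      rw [hu']
      dsimp only
      rw [if_neg hc]
    set y : F := Finsupp.onFinset z.support u' hsupp with hy
    have hyapp : ∀ j, y j = u' j := fun j => rfl
    have hzy : z = π • y := by
      ext j
      rw [Finsupp.smul_apply, smul_eq_mul, hyapp j, hu']
      dsimp only
      by_cases hj : j ∈ z.support
      · rw [if_pos hj, mul_comm, hu j]
      · rw [if_neg hj, mul_zero]
        exact Finsupp.notMem_support_iff.mp hj
    refine ⟨y - σ (πF y), ?_, ?_⟩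
    · have : πF (σ (πF y)) = πF y := congrArg (fun f => f (πF y)) (congrArg DFunLike.coe hσ)
      rw [map_sub, this, sub_self]
    · have h1 : π • σ (πF y) = (0 : F) := by
        rw [← map_smul, ← map_smul, ← hzy, hz, map_zero]
      rw [smul_sub, h1, sub_zero, ← hzy]
  -- claim 5: πF is injective
  have claim5 : Function.Injective πF := by
    rw [← LinearMap.ker_eq_bot]
    rw [Submodule.eq_bot_iff]
    intro z hz
    rw [LinearMap.mem_ker] at hz
    have hdiv : ∀ j : ℕ, ∃ w : F, πF w = 0 ∧ z = π ^ j • w := by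
      intro j
      induction j with
      | zero => exact ⟨z, hz, by rw [pow_zero, one_smul]⟩
      | succ j ih =>
        obtain ⟨w, hw0, hwz⟩ := ih
        obtain ⟨w', hw'0, hww'⟩ := claim4 w hw0
        exact ⟨w', hw'0, by rw [hwz, hww', ← mul_smul, ← pow_succ]⟩
    obtain ⟨w, -, hwz⟩ := hdiv t
    have hπt : π ^ t = 0 := by rw [hπ, ← Nat.cast_pow, ZMod.natCast_self]
    rw [hwz, hπt, zero_smul]
  exact Module.Free.of_equiv (LinearEquiv.ofBijective πF ⟨claim5, claim2⟩)


section RS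
variable (R A : Type) [CommRing R] [CommRing A] [Algebra R A]

def rsMap {X Y : Type} [AddCommGroup X] [Module A X] [AddCommGroup Y] [Module A Y]
    (f : X →ₗ[A] Y) : RestrictScalars R A X →ₗ[R] RestrictScalars R A Y where
  toFun x := f x
  map_add' := f.map_add
  map_smul' r x := f.map_smul (algebraMap R A r) x

@[simp] lemma rsMap_apply {X Y : Type} [AddCommGroup X] [Module A X] [AddCommGroup Y] [Module A Y]
    (f : X →ₗ[A] Y) (x : RestrictScalars R A X) : rsMap R A f x = f x := rfl

/-- `RestrictScalars` of a finsupp module, as finsupps valued in `RestrictScalars R A A`. -/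
def rsFinsuppEquiv (X : Type) : RestrictScalars R A (X →₀ A) ≃ₗ[R] (X →₀ RestrictScalars R A A) where
  toFun a := (show X →₀ A from a)
  invFun a := (show X →₀ A from a)
  left_inv _ := rfl
  right_inv _ := rfl
  map_add' _ _ := rfl
  map_smul' r a := by
    change (algebraMap R A r) • (show X →₀ A from a) = _
    ext x
    rfl

lemma projective_rs [Module.Free R (RestrictScalars R A A)] (X : Type) [AddCommGroup X] [Module A X]
    [Module.Projective A X] : Module.Projective R (RestrictScalars R A X) := by
  obtain ⟨s, hs⟩ := Module.projective_def'.mp (inferInstance : Module.Projective A X)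
  have : Module.Free R (RestrictScalars R A (X →₀ A)) :=
    Module.Free.of_equiv (rsFinsuppEquiv R A X).symm
  refine Module.Projective.of_split (rsMap R A s) (rsMap R A (Finsupp.linearCombination A id)) ?_
  ext x
  have := LinearMap.congr_fun hs x
  exact this
end RS

variable (R : Type) [CommRing R]
noncomputable def rsLaurentEquiv : RestrictScalars R (LaurentPolynomial R) (LaurentPolynomial R) ≃ₗ[R] (ℤ →₀ R) :=
  { toFun := fun a => (show LaurentPolynomial R from a).coeff
    invFun := fun a => (AddMonoidAlgebra.ofCoeff a : LaurentPolynomial R)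
    left_inv := fun a => rfl
    right_inv := fun a => rfl
    map_add' := fun a b => rfl
    map_smul' := fun r a => by
      change ((algebraMap R (LaurentPolynomial R) r) * (show LaurentPolynomial R from a)).coeff = r • (show LaurentPolynomial R from a).coeff
      rw [← Algebra.smul_def]
      rfl }
noncomputable instance free_rs_laurent :
    Module.Free R (RestrictScalars R (LaurentPolynomial R) (LaurentPolynomial R)) :=
  Module.Free.of_equiv (rsLaurentEquiv R).symm


lemma engine (p t : ℕ) (hp : p.Prime) (ht : 1 ≤ t) (k : ℕ) :
    ∀ (M : Type) [AddCommGroup M] [Module (ZMod (p ^ t)) M]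
      (P : ℕ → Type) [∀ i, AddCommGroup (P i)] [∀ i, Module (ZMod (p ^ t)) (P i)],
      (∀ i, Module.Projective (ZMod (p ^ t)) (P i)) →
      ∀ (d : ∀ i : ℕ, P (i + 1) →ₗ[ZMod (p ^ t)] P i) (ε : P 0 →ₗ[ZMod (p ^ t)] M),
      Function.Surjective ε → Function.Exact (d 0) ε →
      (∀ i : ℕ, Function.Exact (d (i + 1)) (d i)) →
      (∀ i, k ≤ i → Subsingleton (P i)) →
      Module.Projective (ZMod (p ^ t)) M := by
  induction k with
  | zero =>
    intro M _ _ P _ _ hP d ε hsurj hexact0 hexact hfin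
    haveI := hfin 0 (le_refl 0)
    haveI : Subsingleton M := hsurj.subsingleton
    infer_instance
  | succ k ih =>
    intro M _ _ P _ _ hP d ε hsurj hexact0 hexact hfin
    haveI := pt_ne_zero p t hp
    set K := LinearMap.range (d 0) with hK
    haveI hKproj : Module.Projective (ZMod (p ^ t)) K := by
      refine ih K (fun i => P (i + 1)) (fun i => hP (i + 1)) (fun i => d (i + 1))
        ((d 0).rangeRestrict) (d 0).surjective_rangeRestrict ?_ (fun i => hexact (i + 1))
        (fun i hi => hfin (i + 1) (by omega))
      intro y
      constructor
      · intro hy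
        have : d 0 y = 0 := by
          have := congrArg (Submodule.subtype K) hy
          simpa using this
        exact (hexact 0 y).mp this
      · intro hy
        have : d 0 y = 0 := (hexact 0 y).mpr hy
        ext
        simpa using this
    haveI hKfree : Module.Free (ZMod (p ^ t)) K := free_of_projective p t hp ht K
    haveI hKinj : Module.Injective (ZMod (p ^ t)) K := injective_of_free K
    obtain ⟨r, hr⟩ := hKinj.out K.subtype (Submodule.injective_subtype K) LinearMap.id
    set φ : P 0 →ₗ[ZMod (p ^ t)] P 0 := LinearMap.id - K.subtype ∘ₗ r with hφ
    have hker : LinearMap.ker ε ≤ LinearMap.ker φ := by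
      intro x hx
      rw [LinearMap.mem_ker] at hx ⊢
      have hxK : x ∈ K := hexact0 x |>.mp hx
      have : r x = ⟨x, hxK⟩ := by
        have := hr ⟨x, hxK⟩
        simpa using this
      rw [hφ]
      simp [this]
    set e := LinearMap.quotKerEquivOfSurjective ε hsurj with he
    set s : M →ₗ[ZMod (p ^ t)] P 0 :=
      (Submodule.liftQ (LinearMap.ker ε) φ hker) ∘ₗ e.symm.toLinearMap with hs
    refine Module.Projective.of_split (M := P 0) s ε ?_
    ext m
    obtain ⟨x, rfl⟩ := hsurj m
    have hex : e (Submodule.Quotient.mk x) = ε x := rfl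
    have hesym : e.symm (ε x) = Submodule.Quotient.mk x := by
      apply e.injective
      rw [e.apply_symm_apply, hex]
    simp only [LinearMap.comp_apply, LinearMap.id_apply, hs, LinearEquiv.coe_toLinearMap]
    rw [hesym, Submodule.liftQ_apply]
    rw [hφ]
    simp only [LinearMap.sub_apply, LinearMap.id_apply, LinearMap.comp_apply, map_sub]
    have : ε (K.subtype (r x)) = 0 := by
      have : (K.subtype (r x) : P 0) ∈ K := (r x).2
      exact (hexact0 _).mpr this
    rw [this, sub_zero]


open LaurentPolynomial in
/-- If a module `M` over the Laurent polynomial ring `A = (ZMod p^t)[x, x⁻¹]` admits a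
finite-length resolution by projective `A`-modules, then the underlying `ZMod p^t`-module
of `M` is free. -/
theorem stmt_17 (p t : ℕ) (hp : p.Prime) (ht : 1 ≤ t)
    (M : Type) [AddCommGroup M] [Module (LaurentPolynomial (ZMod (p ^ t))) M]
    (P : ℕ → Type) [∀ i, AddCommGroup (P i)]
    [∀ i, Module (LaurentPolynomial (ZMod (p ^ t))) (P i)]
    [∀ i, Module.Projective (LaurentPolynomial (ZMod (p ^ t))) (P i)]
    (d : ∀ i : ℕ, P (i + 1) →ₗ[LaurentPolynomial (ZMod (p ^ t))] P i)
    (ε : P 0 →ₗ[LaurentPolynomial (ZMod (p ^ t))] M)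
    (hsurj : Function.Surjective ε)
    (hexact0 : Function.Exact (d 0) ε)
    (hexact : ∀ i : ℕ, Function.Exact (d (i + 1)) (d i))
    (k : ℕ) (hfin : ∀ i ≥ k, Subsingleton (P i)) :
    Module.Free (ZMod (p ^ t))
      (RestrictScalars (ZMod (p ^ t)) (LaurentPolynomial (ZMod (p ^ t))) M) := by
  let R := ZMod (p ^ t)
  let A := LaurentPolynomial R
  haveI hproj : Module.Projective R (RestrictScalars R A M) := by
    refine @engine p t hp ht k (RestrictScalars R A M) _
      (RestrictScalars.module (ZMod (p ^ t)) (LaurentPolynomial (ZMod (p ^ t))) M)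
      (fun i => RestrictScalars R A (P i)) _
      (fun i => RestrictScalars.module (ZMod (p ^ t)) (LaurentPolynomial (ZMod (p ^ t))) (P i))
      (fun i => projective_rs R A (P i)) (fun i => rsMap R A (d i)) (rsMap R A ε)
      ?_ ?_ ?_ ?_
    · exact hsurj
    · exact hexact0
    · exact hexact
    · intro i hi
      haveI := hfin i hi
      exact inferInstanceAs (Subsingleton (P i))
  exact @free_of_projective p t hp ht _ _
    (RestrictScalars.module (ZMod (p ^ t)) (LaurentPolynomial (ZMod (p ^ t))) M) hproj
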